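/- For the Davis–Skodje model with a(u) = u/(u+1) + c·u^γ, the function F₂(c) = ||J(u,a(u))·(f(u,a(u)), g(u,a(u)))ᵀ||² (J the Jacobian of the vector field) is a strictly convex quadratic in c with second derivative F₂''(c) = 2(u^γ γ²)² > 0 for all u > 0, and its unique minimizer is c* = u(u−1)/(u^γ γ² (u+1)³). -/

import Mathlib

open Real

/-- For the Davis–Skodje model with `a(u) = u/(u+1) + c·u^γ`, the function
`F₂(c) = ‖J(u,a(u))·(f(u,a(u)), g(u,a(u)))ᵀ‖²` (with `J` the Jacobian of the vector
field) is a strictly convex quadratic in `c` with `F₂'' ≡ 2(u^γ γ²)² > 0`, and its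
unique minimizer is `c* = u(u−1)/(u^γ γ² (u+1)³)`. -/
theorem F2_strictly_convex_unique_min (γ u : ℝ) (hγ : 1 < γ) (hu : 0 < u)
    (f g : ℝ → ℝ → ℝ)
    (hf : ∀ x y, f x y = -x)
    (hg : ∀ x y, g x y = -γ * y + ((γ - 1) * x + γ * x ^ 2) / (1 + x) ^ 2)
    (a : ℝ → ℝ → ℝ) (ha : ∀ c v, a c v = v / (v + 1) + c * v ^ γ)
    (F₂ : ℝ → ℝ)
    (hF : ∀ c, F₂ c =
      (deriv (fun s => f s (a c u)) u * f u (a c u)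
        + deriv (fun s => f u s) (a c u) * g u (a c u)) ^ 2
      + (deriv (fun s => g s (a c u)) u * f u (a c u)
        + deriv (fun s => g u s) (a c u) * g u (a c u)) ^ 2) :
    StrictConvexOn ℝ Set.univ F₂ ∧
    (∀ c, deriv (deriv F₂) c = 2 * (u ^ γ * γ ^ 2) ^ 2) ∧
    0 < 2 * (u ^ γ * γ ^ 2) ^ 2 ∧
    (∀ c, c ≠ u * (u - 1) / (u ^ γ * γ ^ 2 * (u + 1) ^ 3) →
      F₂ (u * (u - 1) / (u ^ γ * γ ^ 2 * (u + 1) ^ 3)) < F₂ c) := by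
  have h1u : (1 : ℝ) + u ≠ 0 := by positivity
  have hu1 : (u : ℝ) + 1 ≠ 0 := by positivity
  have hA : 0 < u ^ γ * γ ^ 2 := by positivity
  set A : ℝ := u ^ γ * γ ^ 2 with hAdef
  set K : ℝ := u * (1 - u) / (u + 1) ^ 3 with hKdef
  -- derivatives
  have hd1 : ∀ c, deriv (fun s => f s (a c u)) u = -1 := by
    intro c
    have : (fun s => f s (a c u)) = fun s => -s := funext fun s => hf s _
    rw [this]
    simp
  have hd2 : ∀ c, deriv (fun s => f u s) (a c u) = 0 := by
    intro c
    have : (fun s => f u s) = fun _ => -u := funext fun s => hf u s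
    rw [this]
    simp
  have hd4 : ∀ c, deriv (fun s => g u s) (a c u) = -γ := by
    intro c
    have he : (fun s => g u s) = fun s => -γ * s + ((γ - 1) * u + γ * u ^ 2) / (1 + u) ^ 2 :=
      funext fun s => hg u s
    rw [he]
    have h : HasDerivAt (fun s : ℝ => -γ * s + ((γ - 1) * u + γ * u ^ 2) / (1 + u) ^ 2)
        (-γ) (a c u) := by
      simpa using ((hasDerivAt_id (a c u)).const_mul (-γ)).add_const
        (((γ - 1) * u + γ * u ^ 2) / (1 + u) ^ 2)
    exact h.deriv
  set D : ℝ := (((γ - 1) + γ * (2 * u)) * (1 + u) ^ 2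
      - ((γ - 1) * u + γ * u ^ 2) * (2 * (1 + u))) / ((1 + u) ^ 2) ^ 2 with hDdef
  have hd3 : ∀ c, deriv (fun s => g s (a c u)) u = D := by
    intro c
    have he : (fun s => g s (a c u)) =
        fun s => -γ * (a c u) + ((γ - 1) * s + γ * s ^ 2) / (1 + s) ^ 2 :=
      funext fun s => hg s _
    rw [he]
    have hnum : HasDerivAt (fun s : ℝ => (γ - 1) * s + γ * s ^ 2)
        ((γ - 1) + γ * (2 * u)) u := by
      have h1 : HasDerivAt (fun s : ℝ => (γ - 1) * s) (γ - 1) u := by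
        simpa using (hasDerivAt_id u).const_mul (γ - 1)
      have h2 : HasDerivAt (fun s : ℝ => γ * s ^ 2) (γ * (2 * u)) u := by
        have := (hasDerivAt_pow 2 u).const_mul γ
        simpa using this
      exact h1.add h2
    have hden : HasDerivAt (fun s : ℝ => (1 + s) ^ 2) (2 * (1 + u)) u := by
      have := ((hasDerivAt_id u).const_add 1).fun_pow 2
      simpa using this
    have hne : ((1 : ℝ) + u) ^ 2 ≠ 0 := by positivity
    have h := (hnum.div hden hne).const_add (-γ * (a c u))
    exact h.deriv
  have hK2 : ∀ c, F₂ c = u ^ 2 + (A * c + K) ^ 2 := by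
    intro c
    rw [hF, hd1, hd2, hd3, hd4, hf, hg, ha, hAdef, hKdef, hDdef]
    have hγpos : u ^ γ ≠ 0 := by positivity
    field_simp
    ring
  refine ⟨?_, ?_, by positivity, ?_⟩
  · refine ⟨convex_univ, fun x _ y _ hxy p q hp hq hpq => ?_⟩
    simp only [smul_eq_mul]
    rw [hK2, hK2, hK2]
    have hxy' : x - y ≠ 0 := sub_ne_zero.mpr hxy
    have hqe : q = 1 - p := by linarith
    subst hqe
    have h5 : 0 < p * (1 - p) * (A * (x - y)) ^ 2 := by positivity
    nlinarith [h5]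
  · -- second derivative
    have hFeq : F₂ = fun c => u ^ 2 + (A * c + K) ^ 2 := funext hK2
    have hd : ∀ c : ℝ, HasDerivAt F₂ (2 * A ^ 2 * c + 2 * A * K) c := by
      intro c
      rw [hFeq]
      have h1 : HasDerivAt (fun c : ℝ => A * c + K) A c := by
        simpa using ((hasDerivAt_id c).const_mul A).add_const K
      have h2 := (h1.fun_pow 2).const_add (u ^ 2)
      refine h2.congr_deriv ?_
      ring
    have hderiv : deriv F₂ = fun c => 2 * A ^ 2 * c + 2 * A * K :=
      funext fun c => (hd c).deriv
    intro c
    rw [hderiv]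
    have h3 : HasDerivAt (fun c : ℝ => 2 * A ^ 2 * c + 2 * A * K) (2 * A ^ 2) c := by
      simpa using ((hasDerivAt_id c).const_mul (2 * A ^ 2)).add_const (2 * A * K)
    rw [h3.deriv]
  · intro c hc
    have hzero : A * (u * (u - 1) / (A * (u + 1) ^ 3)) + K = 0 := by
      rw [hKdef]
      field_simp
      ring
    rw [hK2, hK2, hzero]
    have hne : A * c + K ≠ 0 := by
      intro h
      apply hc
      have : A * c = A * (u * (u - 1) / (A * (u + 1) ^ 3)) := by
        have := hzero
        linarith
      exact mul_left_cancel₀ (ne_of_gt hA) this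
    have : 0 < (A * c + K) ^ 2 := by positivity
    linarith [this]
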